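/- With $g_1,g_2$ the explicit polynomials $g_1(s,t) = \frac{1}{786432}(51252 s^3 t^2 - 42648 s^3 t + 10530 s^3 + 24544 s^2 t^2 - 11950 s^2 t + 1927 s^2 + 43062 s t - 22600 s + 32343)$ and $g_2(s,t) = \frac{1}{786432}(180 s^3 t^2 - 1368 s^3 t + 7650 s^3 + 27248 s^2 t^2 - 43082 s^2 t - 2185 s^2 - 47742 s t + 33064 s + 32383)$, there exist $s,t \in [0,1]$ with $g_1(s,t) = g_2(s,t) = 1/24$. -/

import Mathlib

/-- The pattern density `g₁(s,t)` of `1234` from Section 7. -/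
noncomputable def g₁ (s t : ℝ) : ℝ :=
  (1 / 786432) * (51252 * s ^ 3 * t ^ 2 - 42648 * s ^ 3 * t + 10530 * s ^ 3
    + 24544 * s ^ 2 * t ^ 2 - 11950 * s ^ 2 * t + 1927 * s ^ 2
    + 43062 * s * t - 22600 * s + 32343)

/-- The pattern density `g₂(s,t)` of `2143` from Section 7. -/
noncomputable def g₂ (s t : ℝ) : ℝ :=
  (1 / 786432) * (180 * s ^ 3 * t ^ 2 - 1368 * s ^ 3 * t + 7650 * s ^ 3
    + 27248 * s ^ 2 * t ^ 2 - 43082 * s ^ 2 * t - 2185 * s ^ 2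
    - 47742 * s * t + 33064 * s + 32383)

/-- Coefficient of `t²` in `786432 * (g₁ s t - 1/24)`. -/
def Ap (s : ℝ) : ℝ := 51252 * s ^ 3 + 24544 * s ^ 2

/-- Coefficient of `t` in `786432 * (g₁ s t - 1/24)`. -/
def Bp (s : ℝ) : ℝ := -42648 * s ^ 3 - 11950 * s ^ 2 + 43062 * s

/-- Constant coefficient of `786432 * (g₁ s t - 1/24)`. -/
def Cp (s : ℝ) : ℝ := 10530 * s ^ 3 + 1927 * s ^ 2 - 22600 * s - 425

/-- Discriminant of the quadratic in `t`. -/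
def Dp (s : ℝ) : ℝ := Bp s ^ 2 - 4 * Ap s * Cp s

/-- Larger root in `t` of `g₁ s t = 1/24`. -/
noncomputable def tc (s : ℝ) : ℝ := (-Bp s + Real.sqrt (Dp s)) / (2 * Ap s)

lemma g1_eq_of_root (s t : ℝ) (h : Ap s * t ^ 2 + Bp s * t + Cp s = 0) :
    g₁ s t = 1 / 24 := by
  simp only [Ap, Bp, Cp] at h
  simp only [g₁]
  linear_combination (1 / 786432 : ℝ) * h

lemma hA_pos {s : ℝ} (hs : s ∈ Set.Icc (27/200 : ℝ) (7/50)) : 0 < Ap s := by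
  obtain ⟨h1, h2⟩ := hs
  have hs0 : (0:ℝ) < s := by linarith
  simp only [Ap]
  nlinarith [pow_pos hs0 3, pow_pos hs0 2]

lemma hC_neg {s : ℝ} (hs : s ∈ Set.Icc (27/200 : ℝ) (7/50)) : Cp s < 0 := by
  obtain ⟨h1, h2⟩ := hs
  have hs0 : (0:ℝ) < s := by linarith
  simp only [Cp]
  nlinarith [pow_pos hs0 3, pow_pos hs0 2, sq_nonneg s, mul_pos hs0 hs0]

lemma hB_pos {s : ℝ} (hs : s ∈ Set.Icc (27/200 : ℝ) (7/50)) : 0 < Bp s := by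
  obtain ⟨h1, h2⟩ := hs
  have hs0 : (0:ℝ) < s := by linarith
  simp only [Bp]
  nlinarith [pow_pos hs0 3, pow_pos hs0 2, mul_pos hs0 hs0]

lemma hD_pos {s : ℝ} (hs : s ∈ Set.Icc (27/200 : ℝ) (7/50)) :
    Bp s ^ 2 < Dp s := by
  have hA := hA_pos hs
  have hC := hC_neg hs
  simp only [Dp]
  nlinarith [mul_pos hA (neg_pos.mpr hC)]

lemma g1_tc {s : ℝ} (hs : s ∈ Set.Icc (27/200 : ℝ) (7/50)) :
    g₁ s (tc s) = 1 / 24 := by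
  have hA := hA_pos hs
  have hD : 0 ≤ Dp s := le_trans (sq_nonneg _) (hD_pos hs).le
  apply g1_eq_of_root
  have h2A : 2 * Ap s ≠ 0 := by positivity
  have ht : 2 * Ap s * tc s = -Bp s + Real.sqrt (Dp s) := by
    rw [tc]; field_simp
  have hsq : Real.sqrt (Dp s) ^ 2 = Bp s ^ 2 - 4 * Ap s * Cp s :=
    (Real.sq_sqrt hD).trans (by rw [Dp])
  have key : 4 * Ap s * (Ap s * tc s ^ 2 + Bp s * tc s + Cp s) = 0 := by
    linear_combination (2 * Ap s * tc s + Bp s + Real.sqrt (Dp s)) * ht + hsq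
  rcases mul_eq_zero.mp key with h | h
  · exact absurd h (by positivity)
  · exact h

lemma tc_mem {s : ℝ} (hs : s ∈ Set.Icc (27/200 : ℝ) (7/50)) :
    tc s ∈ Set.Icc (0:ℝ) 1 := by
  have hA := hA_pos hs
  have hB := hB_pos hs
  have hD := hD_pos hs
  have hBle : Bp s ≤ Real.sqrt (Dp s) := Real.le_sqrt_of_sq_le hD.le
  constructor
  · apply div_nonneg _ (by positivity)
    linarith
  · rw [tc, div_le_one (by positivity)]
    have hABC : 0 ≤ Ap s + Bp s + Cp s := by
      obtain ⟨h1, h2⟩ := hs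
      have hs0 : (0:ℝ) < s := by linarith
      simp only [Ap, Bp, Cp]
      nlinarith [pow_pos hs0 3, pow_pos hs0 2]
    have hDle : Dp s ≤ (2 * Ap s + Bp s) ^ 2 := by
      simp only [Dp]
      nlinarith [mul_nonneg hA.le hABC]
    have := Real.sqrt_le_sqrt hDle
    rw [Real.sqrt_sq (by positivity)] at this
    linarith

lemma contA : Continuous Ap := by unfold Ap; fun_prop

lemma contB : Continuous Bp := by unfold Bp; fun_prop

lemma contD : Continuous Dp := by
  unfold Dp
  exact (contB.pow 2).sub ((continuous_const.mul contA).mul (by unfold Cp; fun_prop))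

lemma tc_continuousOn : ContinuousOn tc (Set.Icc (27/200 : ℝ) (7/50)) := by
  unfold tc
  apply ContinuousOn.div
  · exact (contB.neg.add (Real.continuous_sqrt.comp contD)).continuousOn
  · exact (continuous_const.mul contA).continuousOn
  · intro s hs
    exact ne_of_gt (by have := hA_pos hs; positivity)

lemma g2_continuousOn : ContinuousOn (fun s => g₂ s (tc s))
    (Set.Icc (27/200 : ℝ) (7/50)) := by
  have hg2 : Continuous fun p : ℝ × ℝ => g₂ p.1 p.2 := by
    unfold g₂; fun_prop
  have hpair : ContinuousOn (fun s : ℝ => (s, tc s))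
      (Set.Icc (27/200 : ℝ) (7/50)) :=
    (continuousOn_id' _).prodMk tc_continuousOn
  show ContinuousOn ((fun p : ℝ × ℝ => g₂ p.1 p.2) ∘ fun s => (s, tc s)) _
  exact hg2.comp_continuousOn hpair

lemma tc_lower_bound {s lo : ℝ} (hA : 0 < Ap s) (hlo : 0 ≤ lo)
    (h : lo ^ 2 < Dp s) {c : ℝ} (hc : c * (2 * Ap s) ≤ -Bp s + lo) :
    c < tc s := by
  have hsq : lo < Real.sqrt (Dp s) := Real.lt_sqrt_of_sq_lt h
  rw [tc, lt_div_iff₀ (by positivity)]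
  linarith

lemma tc_upper_bound {s hi : ℝ} (hA : 0 < Ap s) (hhi : 0 < hi)
    (h : Dp s < hi ^ 2) {c : ℝ} (hc : -Bp s + hi ≤ c * (2 * Ap s)) :
    tc s < c := by
  have hsq : Real.sqrt (Dp s) < hi := (Real.sqrt_lt' hhi).mpr h
  rw [tc, div_lt_iff₀ (by positivity)]
  linarith

set_option maxHeartbeats 2000000 in
lemma endpoint_lt : g₂ (27/200) (tc (27/200)) < 1 / 24 := by
  have hs : (27/200 : ℝ) ∈ Set.Icc (27/200 : ℝ) (7/50) := by norm_num
  have hA := hA_pos hs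
  have ht1 : (58608813/100000000 : ℝ) < tc (27/200) := by
    apply tc_lower_bound hA (lo := 130225977258869/21131000000) (by norm_num)
    · simp only [Dp, Ap, Bp, Cp]; norm_num
    · simp only [Ap, Bp]; norm_num
  have ht2 : tc (27/200) < (58608815/100000000 : ℝ) := by
    apply tc_upper_bound hA (hi := 130225977470179/21131000000) (by norm_num)
    · simp only [Dp, Ap, Bp, Cp]; norm_num
    · simp only [Ap, Bp]; norm_num
  set t := tc (27/200) with htdef
  simp only [g₂]
  nlinarith [mul_nonneg (sub_nonneg.2 ht1.le) (sub_nonneg.2 ht2.le)]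

set_option maxHeartbeats 2000000 in
lemma endpoint_gt : 1 / 24 < g₂ (7/50) (tc (7/50)) := by
  have hs : (7/50 : ℝ) ∈ Set.Icc (27/200 : ℝ) (7/50) := by norm_num
  have hA := hA_pos hs
  have ht1 : (58316934/100000000 : ℝ) < tc (7/50) := by
    apply tc_lower_bound hA (lo := 2024759783183757/316243000000) (by norm_num)
    · simp only [Dp, Ap, Bp, Cp]; norm_num
    · simp only [Ap, Bp]; norm_num
  have ht2 : tc (7/50) < (58316936/100000000 : ℝ) := by
    apply tc_upper_bound hA (hi := 2024759786346187/316243000000) (by norm_num)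
    · simp only [Dp, Ap, Bp, Cp]; norm_num
    · simp only [Ap, Bp]; norm_num
  set t := tc (7/50) with htdef
  simp only [g₂]
  nlinarith [mul_nonneg (sub_nonneg.2 ht1.le) (sub_nonneg.2 ht2.le)]

/-- There exist `s, t ∈ [0,1]` with `g₁(s,t) = g₂(s,t) = 1/24`. -/
theorem exists_s_t_densities_eq :
    ∃ s ∈ Set.Icc (0 : ℝ) 1, ∃ t ∈ Set.Icc (0 : ℝ) 1,
      g₁ s t = 1 / 24 ∧ g₂ s t = 1 / 24 := by
  have hab : (27/200 : ℝ) ≤ 7/50 := by norm_num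
  have hmem : (1/24 : ℝ) ∈ Set.Icc (g₂ (27/200) (tc (27/200)))
      (g₂ (7/50) (tc (7/50))) := ⟨endpoint_lt.le, endpoint_gt.le⟩
  obtain ⟨s, hsI, hgs⟩ := intermediate_value_Icc hab g2_continuousOn hmem
  refine ⟨s, ?_, tc s, tc_mem hsI, g1_tc hsI, hgs⟩
  obtain ⟨h1, h2⟩ := hsI
  constructor <;> linarith
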